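/- arXiv:2604.02960 — 2 statements merged into one kernel-verified Lean document; each statement's English description precedes it below -/
import Mathlib

section
/- Let Δ = (log X)^{-2}. Then J₁ = ∫_{1}^{2-Δ} dt / (t(log(2-t) + log X)) = (log 2)/(log X) + O(log log X / (log X)^2) as X → ∞. -/
set_option maxHeartbeats 800000

open Real intervalIntegral

private lemma int_aux (b c : ℝ) (hb : 1 ≤ b) (hc : c ≠ 0) :
    ∫ t in (1:ℝ)..b, 1 / (t * c) = Real.log b / c := by
  have h0 : (0:ℝ) ∉ Set.uIcc 1 b := by
    rw [Set.uIcc_of_le hb]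
    rintro ⟨h1, h2⟩; linarith
  have : ∀ t : ℝ, 1 / (t * c) = c⁻¹ * (1 / t) := by
    intro t; rw [mul_comm t c, one_div, mul_inv, ← one_div t]
  simp_rw [this]
  rw [intervalIntegral.integral_const_mul, integral_one_div h0, div_one,
    div_eq_inv_mul]

/-- With `Δ = (log X)⁻²`, `J₁ = ∫_{1}^{2-Δ} dt / (t(log(2-t)+log X))
= (log 2)/(log X) + O(log log X / (log X)^2)` as `X → ∞`. -/
theorem J1_asymptotic :
    ∃ C : ℝ, 0 < C ∧ ∃ X₀ : ℝ, ∀ X : ℝ, X₀ ≤ X →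
      |(∫ t in (1 : ℝ)..(2 - (Real.log X) ^ (-2 : ℤ)),
          1 / (t * (Real.log (2 - t) + Real.log X)))
        - Real.log 2 / Real.log X|
      ≤ C * Real.log (Real.log X) / (Real.log X) ^ 2 := by
  refine ⟨4, by norm_num, Real.exp (Real.exp 16), fun X hX => ?_⟩
  set L := Real.log X with hLdef
  have hL16 : Real.exp 16 ≤ L := by
    calc Real.exp 16 = Real.log (Real.exp (Real.exp 16)) := (Real.log_exp _).symm
      _ ≤ Real.log X := Real.log_le_log (Real.exp_pos _) hX
  have he8 : (9:ℝ) ≤ Real.exp 8 := by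
    have := Real.add_one_le_exp (8:ℝ); linarith
  have hL81 : (81:ℝ) ≤ L := by
    have : Real.exp 16 = Real.exp 8 * Real.exp 8 := by
      rw [← Real.exp_add]; norm_num
    nlinarith
  have hLpos : 0 < L := by linarith
  have hlogL : (16:ℝ) ≤ Real.log L := by
    calc (16:ℝ) = Real.log (Real.exp 16) := (Real.log_exp _).symm
      _ ≤ Real.log L := Real.log_le_log (Real.exp_pos _) hL16
  have hlogLpos : 0 < Real.log L := by linarith
  -- 4 log L ≤ L
  have hsq : Real.log L ≤ 2 * Real.sqrt L := by
    have h1 : Real.log (Real.sqrt L) ≤ Real.sqrt L - 1 :=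
      Real.log_le_sub_one_of_pos (Real.sqrt_pos.mpr hLpos)
    rw [Real.log_sqrt hLpos.le] at h1
    have := Real.sqrt_nonneg L
    linarith
  have hsL : (8:ℝ) ≤ Real.sqrt L := by
    calc (8:ℝ) = Real.sqrt 64 := by
          rw [show (64:ℝ) = 8^2 by norm_num, Real.sqrt_sq (by norm_num)]
      _ ≤ Real.sqrt L := Real.sqrt_le_sqrt (by linarith)
  have hL4 : 4 * Real.log L ≤ L := by
    have hss : Real.sqrt L * Real.sqrt L = L := Real.mul_self_sqrt hLpos.le
    nlinarith
  set D : ℝ := L ^ (-2 : ℤ) with hDdef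
  have hDeq : D = (L ^ 2)⁻¹ := by
    rw [hDdef, zpow_neg, zpow_two]; ring_nf
  have hDpos : 0 < D := by
    rw [hDeq]; positivity
  have hD1 : D ≤ 1 := by
    rw [hDeq]
    rw [inv_le_one_iff₀]
    right; nlinarith
  have hlogD : Real.log D = -2 * Real.log L := by
    rw [hDdef, Real.log_zpow]; push_cast; ring
  have hb1 : (1:ℝ) ≤ 2 - D := by linarith
  clear_value D L
  clear hDdef hLdef hX
  clear hsq hsL he8 hL16
  -- denominator bounds on Icc
  have hden : ∀ t ∈ Set.Icc (1:ℝ) (2 - D),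
      L - 2 * Real.log L ≤ Real.log (2 - t) + L ∧ Real.log (2 - t) + L ≤ L := by
    intro t ht
    obtain ⟨ht1, ht2⟩ := ht
    have h2t : D ≤ 2 - t := by linarith
    have h2t1 : 2 - t ≤ 1 := by linarith
    constructor
    · have := Real.log_le_log hDpos h2t
      rw [hlogD] at this; linarith
    · have : Real.log (2 - t) ≤ 0 := Real.log_nonpos (by linarith) h2t1
      linarith
  have hLm : 0 < L - 2 * Real.log L := by linarith
  have hcont : ContinuousOn (fun t => 1 / (t * (Real.log (2 - t) + L)))
      (Set.uIcc (1:ℝ) (2 - D)) := by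
    rw [Set.uIcc_of_le hb1]
    apply ContinuousOn.div continuousOn_const
    · apply ContinuousOn.mul continuousOn_id
      apply ContinuousOn.add _ continuousOn_const
      apply Real.continuousOn_log.comp (continuousOn_const.sub continuousOn_id)
      intro t ht
      obtain ⟨ht1, ht2⟩ := ht
      simp only [Set.mem_compl_iff, Set.mem_singleton_iff, Pi.sub_apply, id]
      intro h; have : (2:ℝ) - t ≥ D := by linarith
      linarith
    · intro t ht
      obtain ⟨h1, h2⟩ := hden t ht
      obtain ⟨ht1, ht2⟩ := ht
      have : 0 < t * (Real.log (2 - t) + L) := by nlinarith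
      exact ne_of_gt this
  have hInt : IntervalIntegrable (fun t => 1 / (t * (Real.log (2 - t) + L)))
      MeasureTheory.volume 1 (2 - D) := hcont.intervalIntegrable
  have hIntLow : IntervalIntegrable (fun t => 1 / (t * L))
      MeasureTheory.volume 1 (2 - D) := by
    apply ContinuousOn.intervalIntegrable
    apply ContinuousOn.div continuousOn_const
      (continuousOn_id.mul continuousOn_const)
    rw [Set.uIcc_of_le hb1]
    intro t ht
    have : 0 < t * L := by nlinarith [ht.1]
    exact ne_of_gt this
  have hIntHigh : IntervalIntegrable (fun t => 1 / (t * (L - 2 * Real.log L)))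
      MeasureTheory.volume 1 (2 - D) := by
    apply ContinuousOn.intervalIntegrable
    apply ContinuousOn.div continuousOn_const
      (continuousOn_id.mul continuousOn_const)
    rw [Set.uIcc_of_le hb1]
    intro t ht
    have : 0 < t * (L - 2 * Real.log L) := by nlinarith [ht.1]
    exact ne_of_gt this
  have hlow : Real.log (2 - D) / L ≤
      ∫ t in (1:ℝ)..(2 - D), 1 / (t * (Real.log (2 - t) + L)) := by
    rw [← int_aux (2 - D) L hb1 (ne_of_gt hLpos)]
    apply intervalIntegral.integral_mono_on hb1 hIntLow hInt
    intro t ht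
    obtain ⟨h1, h2⟩ := hden t ht
    have ht1 := ht.1
    apply one_div_le_one_div_of_le
    · nlinarith
    · nlinarith
  have hhigh : (∫ t in (1:ℝ)..(2 - D), 1 / (t * (Real.log (2 - t) + L))) ≤
      Real.log (2 - D) / (L - 2 * Real.log L) := by
    rw [← int_aux (2 - D) (L - 2 * Real.log L) hb1 (ne_of_gt hLm)]
    apply intervalIntegral.integral_mono_on hb1 hInt hIntHigh
    intro t ht
    obtain ⟨h1, h2⟩ := hden t ht
    have ht1 := ht.1
    apply one_div_le_one_div_of_le
    · nlinarith
    · nlinarith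
  -- bounds on log (2 - D)
  have hlog2D_le : Real.log (2 - D) ≤ Real.log 2 :=
    Real.log_le_log (by linarith) (by linarith)
  have hlog2D_ge : Real.log 2 - D ≤ Real.log (2 - D) := by
    have h : Real.log 2 - Real.log (2 - D) = Real.log (2 / (2 - D)) := by
      rw [Real.log_div (by norm_num) (by linarith)]
    have h2 : Real.log (2 / (2 - D)) ≤ 2 / (2 - D) - 1 :=
      Real.log_le_sub_one_of_pos (by positivity)
    have h3 : 2 / (2 - D) - 1 = D / (2 - D) := by field_simp; ring
    have h4 : D / (2 - D) ≤ D := by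
      rw [div_le_iff₀ (by linarith)]; nlinarith
    linarith
  have hlog2pos : 0 < Real.log 2 := Real.log_pos (by norm_num)
  have hlog2le : Real.log 2 ≤ 1 := by
    have := Real.log_le_sub_one_of_pos (show (0:ℝ) < 2 by norm_num); linarith
  have hD' : D = 1 / L ^ 2 := by rw [hDeq, inv_eq_one_div]
  have hDL : D / L ≤ 4 * Real.log L / L ^ 2 := by
    rw [hD', div_div, div_le_div_iff₀ (by positivity) (by positivity)]
    nlinarith [mul_pos (mul_pos hLpos hLpos) hLpos]
  rw [abs_le]
  constructor
  · -- lower bound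
    have key : (Real.log 2 - D) / L ≤ Real.log (2 - D) / L := by
      gcongr
    have hsplit : (Real.log 2 - D) / L = Real.log 2 / L - D / L := sub_div _ _ _
    linarith
  · -- upper bound
    have key : Real.log (2 - D) / (L - 2 * Real.log L) ≤
        Real.log 2 / (L - 2 * Real.log L) := by
      gcongr
    have hgap : Real.log 2 / (L - 2 * Real.log L) - Real.log 2 / L
        ≤ 4 * Real.log L / L ^ 2 := by
      rw [div_sub_div _ _ (ne_of_gt hLm) (ne_of_gt hLpos),
        div_le_div_iff₀ (by positivity) (by positivity)]
      have hfac : 0 ≤ (4 - 2 * Real.log 2) * L - 8 * Real.log L := by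
        nlinarith [mul_le_mul_of_nonneg_right hlog2le hLpos.le]
      nlinarith [mul_nonneg (mul_nonneg hlogLpos.le hLpos.le) hfac]
    linarith
end

section
/- Let q be prime and let A ⊆ X_q be a set of Dirichlet characters mod q of cardinality A with #(A·A) ≤ K·A for some K ≥ 1. Then there exists a set U ⊆ X_q with #U ≤ 2K - 1 such that every χ ∈ A has at least A/2 representations χ = χ₁ · χ₂⁻¹ · η with χ₁, χ₂ ∈ A and η ∈ U. -/
open Finset
open scoped Classical Pointwise

/-- Green–Ruzsa covering lemma for the group of Dirichlet characters mod `q`: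
if `#(A·A) ≤ K·#A` then there is a set `U` with `#U ≤ 2K - 1` such that every `χ ∈ A`
has at least `#A/2` representations `χ = χ₁ · χ₂⁻¹ · η` with `χ₁, χ₂ ∈ A`, `η ∈ U`. -/
theorem green_ruzsa_cover_characters
    (q : ℕ) (hq : q.Prime)
    (A : Finset (DirichletCharacter ℂ q)) (K : ℝ) (hK : 1 ≤ K)
    (hAA : ((A * A).card : ℝ) ≤ K * A.card) :
    ∃ U : Finset (DirichletCharacter ℂ q), (U.card : ℝ) ≤ 2 * K - 1 ∧
      ∀ χ ∈ A,
        ((A.card : ℝ) / 2) ≤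
          ((A ×ˢ A ×ˢ U).filter
            (fun t => χ = t.1 * t.2.1⁻¹ * t.2.2)).card := by
  rcases A.eq_empty_or_nonempty with rfl | ⟨a, ha⟩
  · refine ⟨∅, ?_, by simp⟩
    simp only [card_empty, Nat.cast_zero]
    linarith
  -- the family of subsets U of A with (|U|+1)|A| ≤ 2|U·A|
  set C : Finset (Finset (DirichletCharacter ℂ q)) :=
    A.powerset.filter (fun U => (U.card + 1) * A.card ≤ 2 * (U * A).card) with hC
  have hCne : C.Nonempty := by
    refine ⟨{a}, mem_filter.2 ⟨mem_powerset.2 (by simpa using ha), ?_⟩⟩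
    rw [singleton_mul, card_smul_finset]
    simp [two_mul]
  obtain ⟨U, hUC, hUmax⟩ := C.exists_maximal hCne
  rw [hC, mem_filter, mem_powerset] at hUC
  obtain ⟨hUA, hUcard⟩ := hUC
  have hApos : 0 < (A.card : ℝ) := by
    exact_mod_cast Finset.card_pos.2 ⟨a, ha⟩
  refine ⟨U, ?_, ?_⟩
  · -- cardinality bound
    have h1 : (U * A).card ≤ (A * A).card := card_le_card (mul_subset_mul_right hUA)
    have h1' : ((U * A).card : ℝ) ≤ K * A.card := le_trans (by exact_mod_cast h1) hAA
    have h2 : ((U.card : ℝ) + 1) * A.card ≤ 2 * (K * A.card) := by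
      calc ((U.card : ℝ) + 1) * A.card ≤ 2 * ((U * A).card : ℝ) := by exact_mod_cast hUcard
        _ ≤ 2 * (K * A.card) := by linarith
    have := mul_le_mul_iff_of_pos_right hApos |>.1
      (by linarith : ((U.card : ℝ) + 1) * A.card ≤ (2 * K) * A.card)
    linarith
  · intro χ hχ
    -- key: |χ•A ∩ U·A| ≥ |A|/2
    have hkey : A.card ≤ 2 * ((χ • A) ∩ (U * A)).card := by
      by_cases hχU : χ ∈ U
      · have hsub : χ • A ⊆ U * A := smul_finset_subset_smul hχU
        rw [inter_eq_left.2 hsub, card_smul_finset]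
        omega
      · -- maximality: insert χ U is not in C
        have hnot : ¬ ((U.card + 1 + 1) * A.card ≤ 2 * ((insert χ U) * A).card) := by
          intro hcontra
          refine (ssubset_insert hχU).2 (hUmax (y := insert χ U) (?_ : insert χ U ∈ C) (ssubset_insert hχU).1)
          rw [hC, mem_filter, mem_powerset]
          exact ⟨insert_subset hχ hUA, by rwa [card_insert_of_notMem hχU]⟩
        have hins : (insert χ U) * A = (χ • A) ∪ (U * A) := by
          rw [insert_eq, union_mul, singleton_mul]
        rw [hins] at hnot
        have hiu := card_inter_add_card_union (χ • A) (U * A)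
        rw [card_smul_finset] at hiu
        push_neg at hnot
        have hexp : (U.card + 1 + 1) * A.card = (U.card + 1) * A.card + A.card := by ring
        set x := (U.card + 1) * A.card
        omega
    -- injection from χ•A ∩ U·A into the triple set
    have hinj : ((χ • A) ∩ (U * A)).card ≤
        ((A ×ˢ A ×ˢ U).filter (fun t => χ = t.1 * t.2.1⁻¹ * t.2.2)).card := by
      classical
      refine Finset.card_le_card_of_injOn
        (fun x => if h : x ∈ U * A then
            ((mem_mul.1 h).choose⁻¹ * x, χ⁻¹ * x, (mem_mul.1 h).choose)
          else 1) ?_ ?_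
      · intro x hx
        rw [mem_coe, mem_inter] at hx
        obtain ⟨hx1, hx2⟩ := hx
        simp only [dif_pos hx2]
        obtain ⟨hu, b, hb, hub⟩ := (mem_mul.1 hx2).choose_spec
        set u := (mem_mul.1 hx2).choose with hudef
        have hub' : u⁻¹ * x ∈ A := by rw [← hub]; simpa using hb
        have hxa : χ⁻¹ * x ∈ A := by
          obtain ⟨c, hc, hcx⟩ := mem_smul_finset.1 hx1
          rw [← hcx]; simpa using hc
        simp only [mem_coe, mem_filter, mem_product]
        refine ⟨⟨hub', hxa, hu⟩, ?_⟩
        simp [mul_inv, mul_comm, mul_left_comm, mul_assoc]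
      · intro x hx y hy hxy
        rw [mem_coe, mem_inter] at hx hy
        simp only [dif_pos hx.2, dif_pos hy.2] at hxy
        have := congrArg (fun p : _ × _ × _ => p.2.1) hxy
        simp only at this
        exact mul_left_cancel this
    have h1 : (A.card : ℝ) ≤ 2 * (((χ • A) ∩ (U * A)).card : ℝ) := by exact_mod_cast hkey
    have h2 : (((χ • A) ∩ (U * A)).card : ℝ) ≤
        (((A ×ˢ A ×ˢ U).filter (fun t => χ = t.1 * t.2.1⁻¹ * t.2.2)).card : ℝ) := by
      exact_mod_cast hinj
    linarith
end
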